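/- For any freely reduced words u, v, w not containing a_i^{±1}, |uv|_i^cr − |w|_i^cr − 1 ≤ |uwv|_i^cr ≤ |uv|_i^cr + |w|_i^cr + 1. -/

import Mathlib

namespace ESPaper

/-- A letter of the free group `F_n` over the standard basis: a generator index and a sign
    (`true` = the generator, `false` = its inverse). -/
abbrev Ltr (n : ℕ) := Fin n × Bool

/-- A word over the standard basis and its inverses. -/
abbrev Wrd (n : ℕ) := List (Ltr n)

/-- The inverse of a letter. -/
def linv {n : ℕ} (c : Ltr n) : Ltr n := (c.1, !c.2)

/-- The (formal) inverse of a word. -/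
def winv {n : ℕ} (w : Wrd n) : Wrd n := w.reverse.map linv

/-- `w` is freely reduced: no two consecutive letters are inverse to each other. -/
def Reduced {n : ℕ} (w : Wrd n) : Prop := List.Chain' (fun a b => b ≠ linv a) w

/-- `w` is cyclically reduced. -/
def CyclicallyReduced {n : ℕ} (w : Wrd n) : Prop := Reduced (w ++ w)

/-- `w` contains no occurrence of `a_i^{±1}`. -/
def Avoids {n : ℕ} (i : Fin n) (w : Wrd n) : Prop := ∀ c ∈ w, c.1 ≠ i

/-- `w` is a positive word (no inverse letters). -/
def Positive {n : ℕ} (w : Wrd n) : Prop := ∀ c ∈ w, c.2 = true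

/-- Vertices of the Whitehead graph over `a ∖ {a_i}`: all letters whose index is not `i`. -/
def WVert (n : ℕ) (i : Fin n) := {c : Ltr n // c.1 ≠ i}

/-- The Whitehead graph `Γ_{a∖{a_i}}(w)`: for each pair of consecutive letters `bc` of `w`,
    an edge from `b` to `c⁻¹`. -/
def WGraph {n : ℕ} (i : Fin n) (w : Wrd n) : SimpleGraph (WVert n i) where
  Adj x y := x ≠ y ∧ ∃ p ∈ w.zip w.tail,
    (x.1 = p.1 ∧ y.1 = linv p.2) ∨ (y.1 = p.1 ∧ x.1 = linv p.2)
  symm := by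
    constructor
    rintro x y ⟨hne, p, hp, h⟩
    exact ⟨hne.symm, p, hp, h.symm⟩
  loopless := ⟨fun x h => h.1 rfl⟩

/-- A graph has a cut vertex `v` if it is the union of two subgraphs, each with a vertex
    other than `v`, which intersect exactly in `v`.  (A disconnected graph on at least three
    vertices automatically has a cut vertex in this sense.) -/
def HasCutVertex {V : Type*} (G : SimpleGraph V) : Prop :=
  ∃ (v : V) (H₁ H₂ : G.Subgraph),
    H₁ ⊔ H₂ = ⊤ ∧ H₁.verts ∩ H₂.verts = {v} ∧ H₁.verts ≠ {v} ∧ H₂.verts ≠ {v}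

/-- The simple `i`-length of a word `w` (containing no `a_i^{±1}`): the greatest `t` such
    that `w = w_1 ⋯ w_t` where no Whitehead graph `Γ_{a∖{a_i}}(w_j)` has a cut vertex
    (`0` if there is no such decomposition, in particular if `Γ_{a∖{a_i}}(w)` has a cut
    vertex). -/
noncomputable def simpleLen {n : ℕ} (i : Fin n) (w : Wrd n) : ℕ :=
  sSup {t | ∃ ps : List (Wrd n), ps.length = t ∧ ps.flatten = w ∧
      ∀ p ∈ ps, p ≠ [] ∧ ¬ HasCutVertex (WGraph i p)}

/-- The conjugate reduced `i`-length of `w`: the minimum over all decompositions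
    `w =_r v_1^{u_1} ⋯ v_l^{u_l}` (equality in the free group, `v^u = u⁻¹ v u`) of
    `(l - 1) + Σ_j |v_j|_i^simple`. -/
noncomputable def crLen {n : ℕ} (i : Fin n) (w : Wrd n) : ℕ :=
  sInf {k | ∃ vs us : List (Wrd n), vs ≠ [] ∧ us.length = vs.length ∧
      (∀ v ∈ vs, Reduced v ∧ Avoids i v) ∧
      FreeGroup.mk w =
        ((vs.zip us).map fun p => (FreeGroup.mk p.2)⁻¹ * FreeGroup.mk p.1 * FreeGroup.mk p.2).prod ∧
      k = (vs.length - 1) + (vs.map (simpleLen i)).sum}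

/-- One step of cyclic reduction: cancel the first against the last letter if possible. -/
def stripOnce {n : ℕ} : Wrd n → Wrd n
  | [] => []
  | a :: rest => if rest.getLast? = some (linv a) then rest.dropLast else a :: rest

/-- Cyclic reduction of a (reduced) word. -/
def cyclicReduce {n : ℕ} (w : Wrd n) : Wrd n := stripOnce^[w.length] w

/-- `u` cyclically precedes position `p` in the cyclic word `v`. -/
def CycPrec {n : ℕ} (v : Wrd n) (p : ℕ) (u : Wrd n) : Prop :=
  u <:+ (v ++ v).take (v.length + p)

/-- `u` cyclically follows position `p` in the cyclic word `v`. -/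
def CycFoll {n : ℕ} (v : Wrd n) (p : ℕ) (u : Wrd n) : Prop :=
  u <+: (v ++ v).drop (p + 1)

/-- `u` cyclically precedes every occurrence of `a_i` (and `u⁻¹` cyclically follows every
    occurrence of `a_i⁻¹`) in the cyclic reductions of the words of `Y`. -/
def IsPrecWord {n : ℕ} (i : Fin n) (Y : List (Wrd n)) (u : Wrd n) : Prop :=
  Avoids i u ∧ ∀ y ∈ Y, ∀ p < (cyclicReduce y).length,
    ((cyclicReduce y)[p]? = some (i, true) → CycPrec (cyclicReduce y) p u) ∧
    ((cyclicReduce y)[p]? = some (i, false) → CycFoll (cyclicReduce y) p (winv u))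

open scoped Classical in
/-- The word `w_L(Y)`: a longest word cyclically preceding every occurrence of `a_i`
    in the cyclic reductions of the words of `Y` (trivial if there is no longest one). -/
noncomputable def wL {n : ℕ} (i : Fin n) (Y : List (Wrd n)) : Wrd n :=
  if h : ∃ u, IsPrecWord i Y u ∧ ∀ u', IsPrecWord i Y u' → u'.length ≤ u.length
  then h.choose else []

/-- The set of cyclic positions of `v` occupied by the occurrences of a preceding word of
    length `len` around the occurrences of `a_i^{±1}`. -/
def LOcc {n : ℕ} (i : Fin n) (len : ℕ) (v : Wrd n) : Set ℕ :=
  {t | ∃ p k, p < v.length ∧ k < len ∧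
    ((v[p]? = some (i, true) ∧ t = (p + v.length - 1 - k) % v.length) ∨
     (v[p]? = some (i, false) ∧ t = (p + 1 + k) % v.length))}

/-- The set of cyclic positions of `v` occupied by the occurrences of a following word of
    length `len` around the occurrences of `a_i^{±1}`. -/
def ROcc {n : ℕ} (i : Fin n) (len : ℕ) (v : Wrd n) : Set ℕ :=
  {t | ∃ p k, p < v.length ∧ k < len ∧
    ((v[p]? = some (i, true) ∧ t = (p + 1 + k) % v.length) ∨
     (v[p]? = some (i, false) ∧ t = (p + v.length - 1 - k) % v.length))}

/-- `u` cyclically follows every occurrence of `a_i` (and `u⁻¹` precedes every `a_i⁻¹`)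
    in the cyclic reductions of the words of `Y`, with no occurrence of `u` intersecting an
    occurrence of `w_L(Y)`. -/
def IsFolWord {n : ℕ} (i : Fin n) (Y : List (Wrd n)) (u : Wrd n) : Prop :=
  Avoids i u ∧ (∀ y ∈ Y, ∀ p < (cyclicReduce y).length,
    ((cyclicReduce y)[p]? = some (i, true) → CycFoll (cyclicReduce y) p u) ∧
    ((cyclicReduce y)[p]? = some (i, false) → CycPrec (cyclicReduce y) p (winv u))) ∧
  ∀ y ∈ Y, Disjoint (LOcc i (wL i Y).length (cyclicReduce y)) (ROcc i u.length (cyclicReduce y))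

open scoped Classical in
/-- The word `w_R(Y)`. -/
noncomputable def wR {n : ℕ} (i : Fin n) (Y : List (Wrd n)) : Wrd n :=
  if h : ∃ u, IsFolWord i Y u ∧ ∀ u', IsFolWord i Y u' → u'.length ≤ u.length
  then h.choose else []

/-- The auxiliary automorphism `α'` sending `a_i` to `w_L⁻¹ a_i w_R⁻¹`. -/
noncomputable def alphaP {n : ℕ} (i : Fin n) (Y : List (Wrd n)) :
    FreeGroup (Fin n) →* FreeGroup (Fin n) :=
  FreeGroup.lift fun j => if j = i then
    (FreeGroup.mk (wL i Y))⁻¹ * FreeGroup.of i * (FreeGroup.mk (wR i Y))⁻¹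
  else FreeGroup.of j

/-- The cyclic reduction of `α'(y)` written as a reduced word. -/
noncomputable def apWord {n : ℕ} (i : Fin n) (Y : List (Wrd n)) (y : Wrd n) : Wrd n :=
  cyclicReduce (FreeGroup.toWord (alphaP i Y (FreeGroup.mk y)))

/-- In `α' Y`, every maximal power of `a_i` either occurs by itself as an element, or is
    cyclically conjugated by `u`. -/
def IsConjWord {n : ℕ} (i : Fin n) (Y : List (Wrd n)) (u : Wrd n) : Prop :=
  Avoids i u ∧ ∀ y ∈ Y,
    (∀ c ∈ apWord i Y y, c.1 = i) ∨
    ∀ p < (apWord i Y y).length,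
      (apWord i Y y)[p]?.map Prod.fst = some i →
        (((apWord i Y y)[(p + (apWord i Y y).length - 1) % (apWord i Y y).length]?.map
            Prod.fst ≠ some i → CycPrec (apWord i Y y) p (winv u)) ∧
         ((apWord i Y y)[(p + 1) % (apWord i Y y).length]?.map Prod.fst ≠ some i →
            CycFoll (apWord i Y y) p u))

open scoped Classical in
/-- The word `w_C(Y)` (trivial when every maximal power of `a_i` occurs by itself,
    since then there is no longest conjugating word). -/
noncomputable def wC {n : ℕ} (i : Fin n) (Y : List (Wrd n)) : Wrd n :=
  if h : ∃ u, IsConjWord i Y u ∧ ∀ u', IsConjWord i Y u' → u'.length ≤ u.length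
  then h.choose else []

/-- The automorphism `α_Y` sending `a_i` to `w_L⁻¹ w_C a_i w_C⁻¹ w_R⁻¹`. -/
noncomputable def alphaFG {n : ℕ} (i : Fin n) (Y : List (Wrd n)) :
    FreeGroup (Fin n) →* FreeGroup (Fin n) :=
  FreeGroup.lift fun j => if j = i then
    (FreeGroup.mk (wL i Y))⁻¹ * FreeGroup.mk (wC i Y) * FreeGroup.of i *
      (FreeGroup.mk (wC i Y))⁻¹ * (FreeGroup.mk (wR i Y))⁻¹
  else FreeGroup.of j

/-- `u` is an `i`-chunk of `g`: a maximal cyclic subword of the cyclic reduction of `g`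
    containing no `a_i^{±1}`. -/
def IsIChunk {n : ℕ} (i : Fin n) (g : FreeGroup (Fin n)) (u : Wrd n) : Prop :=
  Avoids i u ∧
    ((∃ p < (cyclicReduce g.toWord).length,
        (cyclicReduce g.toWord)[p]?.map Prod.fst = some i ∧
        u <+: (cyclicReduce g.toWord ++ cyclicReduce g.toWord).drop (p + 1) ∧
        ((cyclicReduce g.toWord ++ cyclicReduce g.toWord).drop (p + 1 + u.length)).head?.map
          Prod.fst = some i) ∨
     (Avoids i (cyclicReduce g.toWord) ∧ ∃ p ≤ (cyclicReduce g.toWord).length,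
        u = (cyclicReduce g.toWord).drop p ++ (cyclicReduce g.toWord).take p))

/-- `k(Y)`: the maximal conjugate reduced `i`-length of an `i`-chunk of `α_Y y`, `y ∈ Y`. -/
noncomputable def kLen {n : ℕ} (i : Fin n) (Y : List (Wrd n)) : ℕ :=
  sSup {c | ∃ y ∈ Y, ∃ u, IsIChunk i (alphaFG i Y (FreeGroup.mk y)) u ∧ c = crLen i u}

/-- The full `i`-length `|Y|_i = k(Y) + |w_R(Y) w_L(Y)|_i^cr` of a set of reduced words. -/
noncomputable def fullLen {n : ℕ} (i : Fin n) (Y : List (Wrd n)) : ℕ :=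
  kLen i Y + crLen i (wR i Y ++ wL i Y)

/-- `x` is an (ordered) basis of the free group: it freely generates, i.e. the induced
    endomorphism of the free group is bijective. -/
def IsBasis {n : ℕ} (x : Fin n → FreeGroup (Fin n)) : Prop :=
  Function.Bijective (FreeGroup.lift x)

/-- A basis of `F_n` given by reduced words over the standard basis. -/
def IsWordBasis {n : ℕ} (x : Fin n → Wrd n) : Prop :=
  (∀ j, Reduced (x j)) ∧ IsBasis fun j => FreeGroup.mk (x j)

/-- `(A, B)` is a free factorization of `G` into two nontrivial free factors. -/
def IsFacPair {G : Type*} [Group G] (A B : Subgroup G) : Prop :=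
  A ≠ ⊥ ∧ B ≠ ⊥ ∧ Function.Bijective (Monoid.Coprod.lift A.subtype B.subtype)

/-- `(P, Q, R)` is a free factorization of `G` into three nontrivial free factors. -/
def IsFac3 {G : Type*} [Group G] (P Q R : Subgroup G) : Prop :=
  P ≠ ⊥ ∧ Q ≠ ⊥ ∧ R ≠ ⊥ ∧
    Function.Bijective (Monoid.CoprodI.lift fun j : Fin 3 => (![P, Q, R] j).subtype)

/-- The conjugate of a subgroup. -/
def conjSub {G : Type*} [Group G] (g : G) (H : Subgroup G) : Subgroup G :=
  H.map (MulAut.conj g).toMonoidHom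

/-- Two (ordered) pairs of subgroups determine the same vertex: they agree up to
    conjugation and swapping the factors. -/
def FacRel {G : Type*} [Group G] (p q : Subgroup G × Subgroup G) : Prop :=
  ∃ g : G, (q.1 = conjSub g p.1 ∧ q.2 = conjSub g p.2) ∨
           (q.1 = conjSub g p.2 ∧ q.2 = conjSub g p.1)

/-- Vertices of the edge splitting graph: pairs of subgroups up to conjugation and swap. -/
abbrev ESV (n : ℕ) := Quot (@FacRel (FreeGroup (Fin n)) _)

/-- The vertex of the edge splitting graph represented by the pair `(A, B)`. -/
def esv {n : ℕ} (A B : Subgroup (FreeGroup (Fin n))) : ESV n := Quot.mk _ (A, B)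

/-- The factorization `p` is refined by the factorization `q` via a common refinement
    `P * Q * R` into three nontrivial free factors: `p = (P*Q, R)` and `q = (P, Q*R)`. -/
def Refines {G : Type*} [Group G] (p q : Subgroup G × Subgroup G) : Prop :=
  ∃ P Q R : Subgroup G, IsFac3 P Q R ∧ p.1 = P ⊔ Q ∧ p.2 = R ∧ q.1 = P ∧ q.2 = Q ⊔ R

/-- The edge splitting graph `ES(n)`: two distinct vertices are adjacent if they admit
    representatives with a common refinement into three nontrivial free factors. -/
def ESGraph (n : ℕ) : SimpleGraph (ESV n) where
  Adj X Y := X ≠ Y ∧ ∃ p q, Quot.mk _ p = X ∧ Quot.mk _ q = Y ∧ (Refines p q ∨ Refines q p)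
  symm := by
    constructor
    rintro X Y ⟨hne, p, q, hp, hq, h⟩
    exact ⟨hne.symm, q, p, hq, hp, h.symm⟩
  loopless := ⟨fun X h => h.1 rfl⟩

/-- Nested families of canceling pairs:  `Fam w gs f` holds iff `w` carries a nested family
    `F` of `f` canceling pairs whose family of (possibly empty) maximal subwords disjoint
    from the pairs is `gs`. -/
inductive Fam {n : ℕ} : Wrd n → List (Wrd n) → ℕ → Prop
  | gap (g : Wrd n) : Fam g [g] 0
  | cons (g u w rest : Wrd n) (gs₁ gs₂ : List (Wrd n)) (f₁ f₂ : ℕ) :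
      u ≠ [] → Fam w gs₁ f₁ → Fam rest gs₂ f₂ →
      Fam (g ++ u ++ w ++ winv u ++ rest) (g :: (gs₁ ++ gs₂)) (f₁ + f₂ + 1)


section Statement7Aux

variable {n : ℕ}

theorem linv_linv (c : Ltr n) : linv (linv c) = c := by
  simp [linv]

theorem winv_append (a b : Wrd n) : winv (a ++ b) = winv b ++ winv a := by
  simp [winv]

theorem winv_winv (w : Wrd n) : winv (winv w) = w := by
  simp [winv, List.map_reverse, Function.comp_def, linv]

theorem mk_winv (w : Wrd n) : FreeGroup.mk (winv w) = (FreeGroup.mk w)⁻¹ := by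
  rw [FreeGroup.inv_mk]
  congr 1
  simp [winv, FreeGroup.invRev, linv, List.map_reverse]

theorem reduced_winv {w : Wrd n} (h : Reduced w) : Reduced (winv w) := by
  unfold Reduced winv List.Chain'
  rw [List.map_reverse, List.isChain_reverse, List.isChain_map]
  refine List.IsChain.imp ?_ h
  intro a b hab
  show linv a ≠ linv (linv b)
  rw [linv_linv]
  exact hab.symm

theorem avoids_winv {i : Fin n} {w : Wrd n} (h : Avoids i w) : Avoids i (winv w) := by
  intro c hc
  simp only [winv, List.mem_map, List.mem_reverse] at hc
  obtain ⟨d, hd, rfl⟩ := hc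
  exact h d hd

theorem mem_zip_tail {α : Type*} : ∀ {l : List α} {p : α × α},
    p ∈ l.zip l.tail ↔ ∃ s t, l = s ++ p.1 :: p.2 :: t
  | [], p => by
      simp
  | [a], p => by
      constructor
      · intro h; simp at h
      · rintro ⟨s, t, h⟩
        have := congrArg List.length h
        simp at this
        omega
  | a :: b :: l, p => by
      have ih := @mem_zip_tail α (b :: l) p
      constructor
      · intro h
        have h' : p = (a, b) ∨ p ∈ (b :: l).zip ((b :: l).tail) := by
          simpa using h
        rcases h' with h' | h'
        · exact ⟨[], l, by simp [h']⟩
        · obtain ⟨s, t, hst⟩ := ih.1 h'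
          exact ⟨a :: s, t, by simp [hst]⟩
      · rintro ⟨s, t, hst⟩
        cases s with
        | nil =>
            simp only [List.nil_append, List.cons.injEq] at hst
            obtain ⟨h1, h2, h3⟩ := hst
            have : p = (a, b) := by
              cases p; simp_all
            simp [this]
        | cons x s' =>
            simp only [List.cons_append, List.cons.injEq] at hst
            have : p ∈ (b :: l).zip ((b :: l).tail) := ih.2 ⟨s', t, hst.2⟩
            simpa using Or.inr this

theorem mem_zip_tail_winv {w : Wrd n} {a b : Ltr n} (h : (a, b) ∈ w.zip w.tail) :
    (linv b, linv a) ∈ (winv w).zip (winv w).tail := by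
  obtain ⟨s, t, hst⟩ := mem_zip_tail.1 h
  refine mem_zip_tail.2 ⟨winv t, winv s, ?_⟩
  rw [hst]
  simp [winv]

theorem wgraph_winv_adj {i : Fin n} {w : Wrd n} {x y : WVert n i}
    (h : (WGraph i w).Adj x y) : (WGraph i (winv w)).Adj x y := by
  obtain ⟨hne, p, hp, hor⟩ := h
  obtain ⟨p1, p2⟩ := p
  refine ⟨hne, (linv p2, linv p1), mem_zip_tail_winv hp, ?_⟩
  simp only at hor ⊢
  rw [linv_linv]
  tauto

theorem wgraph_winv (i : Fin n) (w : Wrd n) : WGraph i (winv w) = WGraph i w := by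
  ext x y
  constructor
  · intro h
    have h2 := wgraph_winv_adj h
    rwa [winv_winv] at h2
  · exact wgraph_winv_adj

theorem winv_flatten (ps : List (Wrd n)) :
    ((ps.map winv).reverse).flatten = winv ps.flatten := by
  induction ps with
  | nil => simp [winv]
  | cons p t ih => simp [winv_append, ih]

/-- The defining set of `simpleLen`. -/
def sSetS (i : Fin n) (w : Wrd n) : Set ℕ :=
  {t | ∃ ps : List (Wrd n), ps.length = t ∧ ps.flatten = w ∧
    ∀ p ∈ ps, p ≠ [] ∧ ¬ HasCutVertex (WGraph i p)}

theorem simpleLen_eq (i : Fin n) (w : Wrd n) : simpleLen i w = sSup (sSetS i w) := rfl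

theorem length_le_flatten (ps : List (Wrd n)) (h : ∀ p ∈ ps, p ≠ []) :
    ps.length ≤ ps.flatten.length := by
  induction ps with
  | nil => simp
  | cons p t ih =>
    simp only [List.flatten_cons, List.length_append, List.length_cons]
    have h1 : 0 < p.length := List.length_pos_iff.2 (h p (by simp))
    have h2 := ih (fun q hq => h q (by simp [hq]))
    omega

theorem sSetS_bdd (i : Fin n) (w : Wrd n) : BddAbove (sSetS i w) := by
  refine ⟨w.length, ?_⟩
  rintro t ⟨ps, rfl, rfl, hps⟩
  exact length_le_flatten ps (fun p hp => (hps p hp).1)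

theorem simpleLen_winv_le (i : Fin n) (w : Wrd n) :
    simpleLen i (winv w) ≤ simpleLen i w := by
  have hsub : sSetS i (winv w) ⊆ sSetS i w := by
    rintro t ⟨ps, rfl, hfl, hps⟩
    refine ⟨(ps.map winv).reverse, by simp, by rw [winv_flatten, hfl, winv_winv], ?_⟩
    intro q hq
    simp only [List.mem_reverse, List.mem_map] at hq
    obtain ⟨p, hp, rfl⟩ := hq
    obtain ⟨h1, h2⟩ := hps p hp
    refine ⟨fun e => h1 ?_, by rwa [wgraph_winv]⟩
    have := congrArg winv e
    rwa [winv_winv] at this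
  rw [simpleLen_eq, simpleLen_eq]
  rcases Set.eq_empty_or_nonempty (sSetS i (winv w)) with he | hne
  · rw [he, csSup_empty]
    exact bot_le
  · exact csSup_le_csSup (sSetS_bdd i w) hne hsub

/-- The conjugation term. -/
def ctm {n : ℕ} (p : Wrd n × Wrd n) : FreeGroup (Fin n) :=
  (FreeGroup.mk p.2)⁻¹ * FreeGroup.mk p.1 * FreeGroup.mk p.2

/-- The defining set of `crLen`. -/
def crSet (i : Fin n) (w : Wrd n) : Set ℕ :=
  {k | ∃ vs us : List (Wrd n), vs ≠ [] ∧ us.length = vs.length ∧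
      (∀ v ∈ vs, Reduced v ∧ Avoids i v) ∧
      FreeGroup.mk w = ((vs.zip us).map ctm).prod ∧
      k = (vs.length - 1) + (vs.map (simpleLen i)).sum}

theorem crLen_eq (i : Fin n) (w : Wrd n) : crLen i w = sInf (crSet i w) := rfl

theorem crLen_le {i : Fin n} {w : Wrd n} {k : ℕ} (h : k ∈ crSet i w) : crLen i w ≤ k := by
  rw [crLen_eq]; exact Nat.sInf_le h

theorem crLen_mem {i : Fin n} {w : Wrd n} (h : (crSet i w).Nonempty) :
    crLen i w ∈ crSet i w := by
  rw [crLen_eq]; exact Nat.sInf_mem h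

theorem prod_trivial_conj (L : List (Wrd n)) :
    ((L.zip (List.replicate L.length ([] : Wrd n))).map ctm).prod = FreeGroup.mk L.flatten := by
  induction L with
  | nil => simp [FreeGroup.one_eq_mk]
  | cons p t ih =>
    simp only [List.length_cons, List.replicate_succ, List.zip_cons_cons, List.map_cons,
      List.prod_cons, ih, List.flatten_cons, ← FreeGroup.mul_mk]
    simp [ctm, ← FreeGroup.one_eq_mk]

theorem crSet_nonempty (i : Fin n) (L : List (Wrd n)) (hL : L ≠ [])
    (h : ∀ p ∈ L, Reduced p ∧ Avoids i p) : (crSet i L.flatten).Nonempty :=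
  ⟨_, L, List.replicate L.length [], hL, by simp, h, (prod_trivial_conj L).symm, rfl⟩

theorem prod_map_conj {G : Type*} [Group G] (l : List G) (g : G) :
    (l.map fun x => g⁻¹ * x * g).prod = g⁻¹ * l.prod * g := by
  induction l with
  | nil => simp
  | cons a t ih =>
    rw [List.map_cons, List.prod_cons, List.prod_cons, ih]
    group

theorem conj_zip_prod (vs us : List (Wrd n)) (c : Wrd n) :
    ((vs.zip (us.map (· ++ c))).map ctm).prod =
      (FreeGroup.mk c)⁻¹ * ((vs.zip us).map ctm).prod * FreeGroup.mk c := by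
  rw [List.zip_map_right, List.map_map]
  have h : (ctm ∘ Prod.map id (· ++ c)) =
      fun p : Wrd n × Wrd n => (FreeGroup.mk c)⁻¹ * ctm p * FreeGroup.mk c := by
    funext p
    simp [ctm, ← FreeGroup.mul_mk, mul_assoc, mul_inv_rev]
  rw [h]
  rw [show (fun p : Wrd n × Wrd n => (FreeGroup.mk c)⁻¹ * ctm p * FreeGroup.mk c) =
      (fun x => (FreeGroup.mk c)⁻¹ * x * FreeGroup.mk c) ∘ ctm from rfl,
    ← List.map_map, prod_map_conj]

theorem inv_zip_prod : ∀ (vs us : List (Wrd n)), us.length = vs.length →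
    ((((vs.map winv).reverse).zip us.reverse).map ctm).prod =
      (((vs.zip us).map ctm).prod)⁻¹ := by
  intro vs
  induction vs with
  | nil =>
    intro us h
    rw [List.length_nil, List.length_eq_zero_iff] at h
    subst h
    simp
  | cons v t ih =>
    intro us h
    cases us with
    | nil => simp at h
    | cons u us' =>
      simp only [List.length_cons] at h
      have hlen : us'.length = t.length := by omega
      simp only [List.map_cons, List.reverse_cons]
      rw [List.zip_append (by simp [hlen]), List.map_append, List.prod_append, ih us' hlen]
      simp only [List.zip_cons_cons, List.zip_nil_right, List.map_cons, List.map_nil,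
        List.prod_cons, List.prod_nil, mul_inv_rev, mul_one]
      simp only [ctm, mk_winv]
      group

theorem crLen_insert_le (i : Fin n) (x y z c : Wrd n)
    (hnex : (crSet i x).Nonempty) (hney : (crSet i y).Nonempty)
    (heq : FreeGroup.mk z =
      (FreeGroup.mk c)⁻¹ * FreeGroup.mk y * FreeGroup.mk c * FreeGroup.mk x) :
    crLen i z ≤ crLen i x + crLen i y + 1 := by
  obtain ⟨vs1, us1, h1ne, h1len, h1red, h1prod, h1k⟩ := crLen_mem hnex
  obtain ⟨vs2, us2, h2ne, h2len, h2red, h2prod, h2k⟩ := crLen_mem hney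
  have hmem : ((vs2 ++ vs1).length - 1) + ((vs2 ++ vs1).map (simpleLen i)).sum
      ∈ crSet i z := by
    refine ⟨vs2 ++ vs1, (us2.map (· ++ c)) ++ us1, by simp [h2ne],
      by simp [h1len, h2len], ?_, ?_, rfl⟩
    · intro q hq
      rcases List.mem_append.1 hq with hq | hq
      exacts [h2red q hq, h1red q hq]
    · rw [List.zip_append (by simp [h2len]), List.map_append, List.prod_append,
        conj_zip_prod, ← h2prod, ← h1prod, heq]
  have hle := crLen_le hmem
  rw [List.length_append, List.map_append, List.sum_append] at hle
  have l1 : 1 ≤ vs1.length := List.length_pos_iff.2 (by simpa using h1ne)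
  have l2 : 1 ≤ vs2.length := List.length_pos_iff.2 (by simpa using h2ne)
  omega

theorem crLen_extract_le (i : Fin n) (x y z c : Wrd n)
    (hnez : (crSet i z).Nonempty) (hney : (crSet i y).Nonempty)
    (heq : FreeGroup.mk x = FreeGroup.mk z *
      ((FreeGroup.mk c)⁻¹ * (FreeGroup.mk y)⁻¹ * FreeGroup.mk c)) :
    crLen i x ≤ crLen i z + crLen i y + 1 := by
  obtain ⟨vs1, us1, h1ne, h1len, h1red, h1prod, h1k⟩ := crLen_mem hnez
  obtain ⟨vs2, us2, h2ne, h2len, h2red, h2prod, h2k⟩ := crLen_mem hney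
  have hmem : ((vs1 ++ (vs2.map winv).reverse).length - 1) +
      ((vs1 ++ (vs2.map winv).reverse).map (simpleLen i)).sum ∈ crSet i x := by
    refine ⟨vs1 ++ (vs2.map winv).reverse, us1 ++ ((us2.map (· ++ c)).reverse),
      by simp [h1ne], by simp [h1len, h2len], ?_, ?_, rfl⟩
    · intro q hq
      rcases List.mem_append.1 hq with hq | hq
      · exact h1red q hq
      · simp only [List.mem_reverse, List.mem_map] at hq
        obtain ⟨p, hp, rfl⟩ := hq
        exact ⟨reduced_winv (h2red p hp).1, avoids_winv (h2red p hp).2⟩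
    · rw [List.zip_append (by simp [h1len]), List.map_append, List.prod_append,
        inv_zip_prod vs2 (us2.map (· ++ c)) (by simp [h2len]),
        conj_zip_prod, ← h1prod, ← h2prod, heq]
      group
  have hle := crLen_le hmem
  rw [List.length_append, List.map_append, List.sum_append, List.length_reverse,
    List.length_map] at hle
  have hsum : ((vs2.map winv).reverse.map (simpleLen i)).sum ≤
      (vs2.map (simpleLen i)).sum := by
    rw [← List.map_reverse, List.map_map, ← List.sum_reverse (vs2.map (simpleLen i)),
      ← List.map_reverse]
    exact List.sum_le_sum (fun p _ => simpleLen_winv_le i p)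
  have l1 : 1 ≤ vs1.length := List.length_pos_iff.2 (by simpa using h1ne)
  have l2 : 1 ≤ vs2.length := List.length_pos_iff.2 (by simpa using h2ne)
  omega

end Statement7Aux

/-- conjugate reduced `i`-length under insertion of a middle word. -/
theorem statement7 (n : ℕ) (hn : 2 < n) (i : Fin n) (u v w : Wrd n)
    (hu : Reduced u) (hv : Reduced v) (hw : Reduced w)
    (havu : Avoids i u) (havv : Avoids i v) (havw : Avoids i w) :
    (crLen i (u ++ v) : ℤ) - crLen i w - 1 ≤ crLen i (u ++ w ++ v) ∧
      (crLen i (u ++ w ++ v) : ℤ) ≤ crLen i (u ++ v) + crLen i w + 1 := by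
  have hne_uv : (crSet i (u ++ v)).Nonempty := by
    have := crSet_nonempty i [u, v] (by simp)
      (by rintro p hp; simp at hp; rcases hp with rfl | rfl <;> exact ⟨by assumption, by assumption⟩)
    simpa using this
  have hne_w : (crSet i w).Nonempty := by
    have := crSet_nonempty i [w] (by simp) (by rintro p hp; simp at hp; subst hp; exact ⟨hw, havw⟩)
    simpa using this
  have hne_uwv : (crSet i (u ++ w ++ v)).Nonempty := by
    have := crSet_nonempty i [u, w, v] (by simp)
      (by rintro p hp; simp at hp; rcases hp with rfl | rfl | rfl <;>
        exact ⟨by assumption, by assumption⟩)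
    simpa [List.append_assoc] using this
  have hub : crLen i (u ++ w ++ v) ≤ crLen i (u ++ v) + crLen i w + 1 := by
    refine crLen_insert_le i (u ++ v) w (u ++ w ++ v) (winv u) hne_uv hne_w ?_
    simp only [← FreeGroup.mul_mk, mk_winv, inv_inv]
    group
  have hlb : crLen i (u ++ v) ≤ crLen i (u ++ w ++ v) + crLen i w + 1 := by
    refine crLen_extract_le i (u ++ v) w (u ++ w ++ v) v hne_uwv hne_w ?_
    simp only [← FreeGroup.mul_mk]
    group
  constructor <;> omega

end ESPaper
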